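/- arXiv:0910.3009 — 3 statements merged into one kernel-verified Lean document; each statement's English description precedes it below -/
import Mathlib

section
/- For all x, y ∈ S² with x ≠ ±y, the operator T(x,y) = C(x,y) − O(x,y) : y^⊥ → x^⊥ is the restriction to y^⊥ of the unique rotation g ∈ SO(3) which maps y to x and fixes the common line x^⊥ ∩ y^⊥ pointwise (i.e. the rotation in the plane spanned by x and y, which is parallel translation along the unique geodesic of S² from y to x). In particular T(x,y) is an orthogonal isomorphism from y^⊥ onto x^⊥. -/
noncomputable section

open MeasureTheory Submodule
open scoped RealInnerProductSpace Matrix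

abbrev V : Type := EuclideanSpace ℝ (Fin 3)

abbrev S2 : Type := Metric.sphere (0 : V) 1

/-- The plane `x^⊥` orthogonal to a point `x` of the unit sphere. -/
def plane (x : S2) : Submodule ℝ V := (ℝ ∙ (x : V))ᗮ

/-- The common line `x^⊥ ∩ y^⊥`. -/
def cline (x y : S2) : Submodule ℝ V := plane x ⊓ plane y

/-- The common-lines kernel `C(x,y) : V → V`: orthogonal projection onto the line
`x^⊥ ∩ y^⊥`.  Its restriction to `y^⊥` is the kernel of the paper: it sends `v ∈ y^⊥` to
the orthogonal projection of `v` onto `x^⊥ ∩ y^⊥`, viewed inside `x^⊥`. -/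
def Cker (x y : S2) : V →ₗ[ℝ] V :=
  (cline x y).subtype ∘ₗ (orthogonalProjection (cline x y)).toLinearMap

/-- The map on the sphere induced by a linear isometry of `V`. -/
def sphereMap (g : V ≃ₗᵢ[ℝ] V) (x : S2) : S2 :=
  ⟨g x, by
    have := mem_sphere_zero_iff_norm.mp x.2
    simp [mem_sphere_zero_iff_norm, this]⟩

/-- The antipodal map on the sphere. -/
def negS (x : S2) : S2 :=
  ⟨-(x : V), by
    have := mem_sphere_zero_iff_norm.mp x.2
    simp [mem_sphere_zero_iff_norm, this]⟩

/-- The orthogonal projection `Pr_{x^⊥} : V → x^⊥`, viewed with values in `V`. -/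
def projPerp (x : S2) (v : V) : V := (orthogonalProjection (plane x) v : V)

/-- The unit vector `o_{x,y} = Pr_{x^⊥}(y)/‖Pr_{x^⊥}(y)‖ ∈ x^⊥`. -/
def oVec (x y : S2) : V := ‖projPerp x (y : V)‖⁻¹ • projPerp x (y : V)

/-- The orthographic kernel `O(x,y) : V → V`, `v ↦ B(o_{y,x}, v)·o_{x,y}`.  Its restriction
to `y^⊥` is the kernel of the paper, with values in `x^⊥`. -/
def Oker (x y : S2) : V →ₗ[ℝ] V where
  toFun v := ⟪oVec y x, v⟫ • oVec x y
  map_add' a b := by simp only [inner_add_right, add_smul]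
  map_smul' c a := by simp only [inner_smul_right, RingHom.id_apply, smul_smul]

set_option maxHeartbeats 2000000 in
/-- For `x ≠ ±y` the operator `T(x,y) = C(x,y) - O(x,y) : y^⊥ → x^⊥` is the
restriction to `y^⊥` of the unique rotation `g ∈ SO(3)` mapping `y` to `x` and fixing the
common line `x^⊥ ∩ y^⊥` pointwise (parallel translation along the unique geodesic of `S²`
from `y` to `x`).  In particular `T(x,y)` is an orthogonal isomorphism of `y^⊥` onto `x^⊥`. -/
theorem parallel_translation_kernel (x y : S2)
    (hxy : (x : V) ≠ (y : V)) (hxy' : (x : V) ≠ -(y : V)) :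
    -- there is a unique rotation mapping `y` to `x` and fixing the common line pointwise
    (∃! g : V ≃ₗᵢ[ℝ] V,
      LinearMap.det (g.toLinearEquiv : V →ₗ[ℝ] V) = 1 ∧ g (y : V) = (x : V) ∧
        ∀ u ∈ cline x y, g u = u) ∧
    -- `T(x,y)` is the restriction of this rotation to `y^⊥`
    (∀ g : V ≃ₗᵢ[ℝ] V,
      LinearMap.det (g.toLinearEquiv : V →ₗ[ℝ] V) = 1 → g (y : V) = (x : V) →
      (∀ u ∈ cline x y, g u = u) →
      ∀ v ∈ plane y, (Cker x y - Oker x y) v = g v) ∧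
    -- in particular `T(x,y)` maps `y^⊥` isometrically onto `x^⊥`
    (∀ v ∈ plane y, (Cker x y - Oker x y) v ∈ plane x ∧
      ‖(Cker x y - Oker x y) v‖ = ‖v‖) ∧
    (∀ w ∈ plane x, ∃ v ∈ plane y, (Cker x y - Oker x y) v = w) := by
  have hx1 : ‖(x : V)‖ = 1 := mem_sphere_zero_iff_norm.mp x.2
  have hy1 : ‖(y : V)‖ = 1 := mem_sphere_zero_iff_norm.mp y.2
  set xv : V := (x : V) with hxv
  set yv : V := (y : V) with hyv
  have ED : ∀ a b : V, ⟪a, b⟫ = (fun i => a i) ⬝ᵥ (fun i => b i) := fun a b => by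
    simp [PiLp.inner_apply, dotProduct, RCLike.inner_apply, mul_comm]
  have hxx : ⟪xv, xv⟫ = 1 := by rw [real_inner_self_eq_norm_sq, hx1]; norm_num
  have hyy : ⟪yv, yv⟫ = 1 := by rw [real_inner_self_eq_norm_sq, hy1]; norm_num
  set c : ℝ := ⟪xv, yv⟫ with hcdef
  have hxyc : ⟪xv, yv⟫ = c := rfl
  have hyxc : ⟪yv, xv⟫ = c := by rw [real_inner_comm]
  have hc1 : c < 1 := (inner_lt_one_iff_real_of_norm_eq_one hx1 hy1).mpr hxy
  have hc2 : -1 < c := by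
    have hny : ‖-yv‖ = 1 := by simpa using hy1
    have h := (inner_lt_one_iff_real_of_norm_eq_one hx1 hny).mpr hxy'
    rw [inner_neg_right] at h
    linarith
  set s : ℝ := Real.sqrt (1 - c ^ 2) with hsdef
  have hs0 : 0 < s := Real.sqrt_pos.mpr (by nlinarith)
  have hs2 : s ^ 2 = 1 - c ^ 2 := Real.sq_sqrt (by nlinarith)
  have hsne : s ≠ 0 := ne_of_gt hs0
  set ov : V := s⁻¹ • (xv - c • yv) with hovdef
  set oxy : V := s⁻¹ • (yv - c • xv) with hoxydef
  obtain ⟨n1, hxn1, hyn1, hn1n1⟩ : ∃ n : V, ⟪xv, n⟫ = 0 ∧ ⟪yv, n⟫ = 0 ∧ ⟪n, n⟫ = 1 - c ^ 2 := by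
    refine ⟨(show V from WithLp.toLp 2 (crossProduct (fun i => xv i) (fun i => yv i))), ?_, ?_, ?_⟩
    · rw [ED]; exact dot_self_cross _ _
    · rw [ED]; exact dot_cross_self _ _
    · rw [ED]
      have h2 : ((fun i => xv i) ⬝ᵥ fun i => xv i) = 1 := (ED xv xv).symm.trans hxx
      have h3 : ((fun i => yv i) ⬝ᵥ fun i => yv i) = 1 := (ED yv yv).symm.trans hyy
      have h4 : ((fun i => xv i) ⬝ᵥ fun i => yv i) = c := (ED xv yv).symm.trans hxyc
      have h5 : ((fun i => yv i) ⬝ᵥ fun i => xv i) = c := (ED yv xv).symm.trans hyxc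
      have h := cross_dot_cross (fun i => xv i) (fun i => yv i) (fun i => xv i) (fun i => yv i)
      rw [h2, h3, h4, h5] at h
      exact h.trans (by ring : (1:ℝ) * 1 - c * c = 1 - c ^ 2)
  set nv : V := s⁻¹ • n1 with hnvdef
  clear_value c s ov oxy nv
  -- inner product table
  have hyov : ⟪yv, ov⟫ = 0 := by
    rw [hovdef, real_inner_smul_right, inner_sub_right, real_inner_smul_right, hyxc, hyy]
    ring
  have hovy : ⟪ov, yv⟫ = 0 := by rw [real_inner_comm]; exact hyov
  have hovov : ⟪ov, ov⟫ = 1 := by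
    rw [hovdef, real_inner_smul_right, real_inner_smul_left, inner_sub_left, inner_sub_right,
      inner_sub_right, real_inner_smul_left, real_inner_smul_left, real_inner_smul_right,
      real_inner_smul_right, hxx, hyy, hxyc, hyxc]
    field_simp
    linear_combination -hs2
  have hynv : ⟪yv, nv⟫ = 0 := by rw [hnvdef, real_inner_smul_right, hyn1]; ring
  have hnvy : ⟪nv, yv⟫ = 0 := by rw [real_inner_comm]; exact hynv
  have hxnv : ⟪xv, nv⟫ = 0 := by rw [hnvdef, real_inner_smul_right, hxn1]; ring
  have hnvx : ⟪nv, xv⟫ = 0 := by rw [real_inner_comm]; exact hxnv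
  have hnvnv : ⟪nv, nv⟫ = 1 := by
    rw [hnvdef, real_inner_smul_right, real_inner_smul_left, hn1n1, ← hs2]
    field_simp
  have hovnv : ⟪ov, nv⟫ = 0 := by
    rw [hovdef, real_inner_smul_left, inner_sub_left, real_inner_smul_left, hxnv, hynv]
    ring
  have hnvov : ⟪nv, ov⟫ = 0 := by rw [real_inner_comm]; exact hovnv
  have hxoxy : ⟪xv, oxy⟫ = 0 := by
    rw [hoxydef, real_inner_smul_right, inner_sub_right, real_inner_smul_right, hxyc, hxx]
    ring
  have hoxyx : ⟪oxy, xv⟫ = 0 := by rw [real_inner_comm]; exact hxoxy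
  have hoxyoxy : ⟪oxy, oxy⟫ = 1 := by
    rw [hoxydef, real_inner_smul_right, real_inner_smul_left, inner_sub_left, inner_sub_right,
      inner_sub_right, real_inner_smul_left, real_inner_smul_left, real_inner_smul_right,
      real_inner_smul_right, hxx, hyy, hxyc, hyxc]
    field_simp
    linear_combination -hs2
  have hoxynv : ⟪oxy, nv⟫ = 0 := by
    rw [hoxydef, real_inner_smul_left, inner_sub_left, real_inner_smul_left, hxnv, hynv]
    ring
  have hnvoxy : ⟪nv, oxy⟫ = 0 := by rw [real_inner_comm]; exact hoxynv
  have hyoxy : ⟪yv, oxy⟫ = s := by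
    rw [hoxydef, real_inner_smul_right, inner_sub_right, real_inner_smul_right, hyxc, hyy]
    field_simp
    linear_combination -hs2
  have hovx : ⟪ov, xv⟫ = s := by
    rw [hovdef, real_inner_smul_left, inner_sub_left, real_inner_smul_left, hxx, hyxc]
    field_simp
    linear_combination -hs2
  have hovoxy : ⟪ov, oxy⟫ = -c := by
    rw [hovdef, hoxydef, real_inner_smul_right, real_inner_smul_left, inner_sub_left,
      inner_sub_right, inner_sub_right, real_inner_smul_left, real_inner_smul_left,
      real_inner_smul_right, real_inner_smul_right, hxx, hyy, hxyc, hyxc]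
    field_simp
    linear_combination c*hs2
  -- orthonormal bases
  set f : Fin 3 → V := ![yv, ov, nv] with hfdef
  set f' : Fin 3 → V := ![xv, -oxy, nv] with hf'def
  have hnov : ‖ov‖ = 1 := by rw [norm_eq_sqrt_real_inner, hovov, Real.sqrt_one]
  have hnnv : ‖nv‖ = 1 := by rw [norm_eq_sqrt_real_inner, hnvnv, Real.sqrt_one]
  have hnoxy : ‖oxy‖ = 1 := by rw [norm_eq_sqrt_real_inner, hoxyoxy, Real.sqrt_one]
  have honf : Orthonormal ℝ f := by
    rw [orthonormal_iff_ite]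
    intro i j
    fin_cases i <;> fin_cases j <;>
      simp [hfdef, hyy, hyov, hovy, hynv, hnvy, hovov, hovnv, hnvov, hnvnv, hy1, hnov, hnnv]
  have honf' : Orthonormal ℝ f' := by
    rw [orthonormal_iff_ite]
    intro i j
    fin_cases i <;> fin_cases j <;>
      simp [hf'def, hxx, hxoxy, hoxyx, hxnv, hnvx, hoxyoxy, hoxynv, hnvoxy, hnvnv,
        inner_neg_left, inner_neg_right, hx1, hnoxy, hnnv]
  have hcard : Fintype.card (Fin 3) = Module.finrank ℝ V := by
    simp [finrank_euclideanSpace_fin]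
  have hspan : ⊤ ≤ Submodule.span ℝ (Set.range f) := by
    rw [← coe_basisOfOrthonormalOfCardEqFinrank honf hcard]
    exact (basisOfOrthonormalOfCardEqFinrank honf hcard).span_eq.ge
  have hspan' : ⊤ ≤ Submodule.span ℝ (Set.range f') := by
    rw [← coe_basisOfOrthonormalOfCardEqFinrank honf' hcard]
    exact (basisOfOrthonormalOfCardEqFinrank honf' hcard).span_eq.ge
  set B : OrthonormalBasis (Fin 3) ℝ V := OrthonormalBasis.mk honf hspan with hBdef
  set B' : OrthonormalBasis (Fin 3) ℝ V := OrthonormalBasis.mk honf' hspan' with hB'def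
  have hBcoe : ∀ i, B i = f i := fun i => by rw [hBdef, OrthonormalBasis.coe_mk]
  have hB'coe : ∀ i, B' i = f' i := fun i => by rw [hB'def, OrthonormalBasis.coe_mk]
  set g : V ≃ₗᵢ[ℝ] V := B.repr.trans B'.repr.symm with hgdef
  have hgf : ∀ i, g (f i) = f' i := fun i => by
    rw [hgdef, ← hBcoe i, ← hB'coe i, LinearIsometryEquiv.trans_apply,
      OrthonormalBasis.repr_self, OrthonormalBasis.repr_symm_single]
  clear_value B B' g
  have hgy : g yv = xv := by simpa [hfdef, hf'def] using hgf 0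
  have hgov : g ov = -oxy := by simpa [hfdef, hf'def] using hgf 1
  have hgnv : g nv = nv := by simpa [hfdef, hf'def] using hgf 2
  -- expansion in the basis `f`
  have hrepr : ∀ v : V, v = ⟪yv, v⟫ • yv + ⟪ov, v⟫ • ov + ⟪nv, v⟫ • nv := fun v => by
    have h := B.sum_repr' v
    rw [Fin.sum_univ_three] at h
    simp only [hBcoe] at h
    simp only [hfdef, Matrix.cons_val_zero, Matrix.cons_val_one, Matrix.head_cons,
      Matrix.cons_val_two, Matrix.tail_cons] at h
    exact h.symm
  have hrepr' : ∀ v : V, v = ⟪xv, v⟫ • xv + ⟪oxy, v⟫ • oxy + ⟪nv, v⟫ • nv := fun v => by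
    have h := B'.sum_repr' v
    rw [Fin.sum_univ_three] at h
    simp only [hB'coe] at h
    simp only [hf'def, Matrix.cons_val_zero, Matrix.cons_val_one, Matrix.head_cons,
      Matrix.cons_val_two, Matrix.tail_cons, inner_neg_left, neg_smul, smul_neg, neg_neg] at h
    exact h.symm
  -- common line facts
  have hclmem : ∀ u : V, u ∈ cline x y ↔ ⟪xv, u⟫ = 0 ∧ ⟪yv, u⟫ = 0 := fun u => by
    simp [cline, plane, Submodule.mem_inf,
      Submodule.mem_orthogonal_singleton_iff_inner_right, ← hxv, ← hyv]
  have hnvcl : nv ∈ cline x y := (hclmem nv).mpr ⟨hxnv, hynv⟩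
  have hclspan : ∀ u ∈ cline x y, u = ⟪nv, u⟫ • nv := fun u hu => by
    obtain ⟨hxu, hyu⟩ := (hclmem u).mp hu
    have hovu : ⟪ov, u⟫ = 0 := by
      rw [hovdef, real_inner_smul_left, inner_sub_left, real_inner_smul_left, hxu, hyu]
      ring
    have h := hrepr u
    rw [hyu, hovu] at h
    simpa using h
  -- evaluation of the two kernels
  have hCk : ∀ v : V, Cker x y v = ⟪nv, v⟫ • nv := fun v => by
    have hmem : ⟪nv, v⟫ • nv ∈ cline x y := Submodule.smul_mem _ _ hnvcl
    have horth : ∀ w ∈ cline x y, ⟪v - ⟪nv, v⟫ • nv, w⟫ = 0 := by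
      intro w hw
      rw [hclspan w hw, real_inner_smul_right, inner_sub_left, real_inner_smul_left, hnvnv,
        real_inner_comm nv v]
      ring
    exact eq_starProjection_of_mem_of_inner_eq_zero hmem horth
  have hnormov : ‖xv - c • yv‖ = s := by
    rw [hsdef, ← Real.sqrt_sq (norm_nonneg (xv - c • yv)), ← real_inner_self_eq_norm_sq]
    congr 1
    rw [inner_sub_left, inner_sub_right, inner_sub_right, real_inner_smul_left,
      real_inner_smul_left, real_inner_smul_right, real_inner_smul_right, hxx, hyy, hxyc, hyxc]
    ring
  have hnormoxy : ‖yv - c • xv‖ = s := by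
    rw [hsdef, ← Real.sqrt_sq (norm_nonneg (yv - c • xv)), ← real_inner_self_eq_norm_sq]
    congr 1
    rw [inner_sub_left, inner_sub_right, inner_sub_right, real_inner_smul_left,
      real_inner_smul_left, real_inner_smul_right, real_inner_smul_right, hxx, hyy, hxyc, hyxc]
    ring
  have hprojyx : projPerp y xv = xv - c • yv := by
    show (plane y).starProjection xv = _
    rw [show plane y = (ℝ ∙ yv)ᗮ from rfl, starProjection_orthogonal_val,
      starProjection_unit_singleton ℝ hy1]
    rw [hyxc]
  have hprojxy : projPerp x yv = yv - c • xv := by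
    show (plane x).starProjection yv = _
    rw [show plane x = (ℝ ∙ xv)ᗮ from rfl, starProjection_orthogonal_val,
      starProjection_unit_singleton ℝ hx1]
    rw [hxyc]
  have hOv1 : oVec y x = ov := by
    rw [oVec, ← hxv]
    rw [hprojyx, hnormov, hovdef]
  have hOv2 : oVec x y = oxy := by
    rw [oVec, ← hyv]
    rw [hprojxy, hnormoxy, hoxydef]
  have hOk : ∀ v : V, Oker x y v = ⟪ov, v⟫ • oxy := fun v => by
    show ⟪oVec y x, v⟫ • oVec x y = _
    rw [hOv1, hOv2]
  -- determinant helper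
  have hdetmat : ∀ (h : V ≃ₗᵢ[ℝ] V) (w0 w1 w2 : V), h yv = w0 → h ov = w1 → h nv = w2 →
      LinearMap.det (h.toLinearEquiv : V →ₗ[ℝ] V) =
        Matrix.det !![⟪yv, w0⟫, ⟪yv, w1⟫, ⟪yv, w2⟫;
                      ⟪ov, w0⟫, ⟪ov, w1⟫, ⟪ov, w2⟫;
                      ⟪nv, w0⟫, ⟪nv, w1⟫, ⟪nv, w2⟫] := by
    intro h w0 w1 w2 h0 h1 h2
    have hentry : ∀ (φ : V →ₗ[ℝ] V) (i j : Fin 3),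
        LinearMap.toMatrix B.toBasis B.toBasis φ i j = ⟪f i, φ (f j)⟫ := by
      intro φ i j
      rw [LinearMap.toMatrix_apply, OrthonormalBasis.coe_toBasis_repr_apply,
        OrthonormalBasis.repr_apply_apply, OrthonormalBasis.coe_toBasis, hBcoe, hBcoe]
    rw [← LinearMap.det_toMatrix B.toBasis]
    congr 1
    ext i j
    rw [hentry]
    fin_cases i <;> fin_cases j
    · exact congrArg (fun z => (⟪yv, z⟫ : ℝ)) h0
    · exact congrArg (fun z => (⟪yv, z⟫ : ℝ)) h1
    · exact congrArg (fun z => (⟪yv, z⟫ : ℝ)) h2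
    · exact congrArg (fun z => (⟪ov, z⟫ : ℝ)) h0
    · exact congrArg (fun z => (⟪ov, z⟫ : ℝ)) h1
    · exact congrArg (fun z => (⟪ov, z⟫ : ℝ)) h2
    · exact congrArg (fun z => (⟪nv, z⟫ : ℝ)) h0
    · exact congrArg (fun z => (⟪nv, z⟫ : ℝ)) h1
    · exact congrArg (fun z => (⟪nv, z⟫ : ℝ)) h2
  have hdetg : LinearMap.det (g.toLinearEquiv : V →ₗ[ℝ] V) = 1 := by
    rw [hdetmat g xv (-oxy) nv hgy hgov hgnv, Matrix.det_fin_three]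
    simp only [Matrix.of_apply, Matrix.cons_val', Matrix.cons_val_zero, Matrix.cons_val_one,
      Matrix.head_cons, Matrix.empty_val', Matrix.cons_val_fin_one, Matrix.head_fin_const,
      Matrix.cons_val_two, Matrix.tail_cons, inner_neg_right, hyxc, hyoxy, hynv, hovx, hovoxy,
      hovnv, hnvx, hnvoxy, hnvnv]
    linear_combination hs2
  have hgcl : ∀ u ∈ cline x y, g u = u := fun u hu => by
    conv_lhs => rw [hclspan u hu]
    rw [_root_.map_smul, hgnv, ← hclspan u hu]
  -- uniqueness
  have huniq : ∀ g' : V ≃ₗᵢ[ℝ] V,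
      LinearMap.det (g'.toLinearEquiv : V →ₗ[ℝ] V) = 1 → g' yv = xv →
      (∀ u ∈ cline x y, g' u = u) → g' = g := by
    intro g' hd hm hfx
    have hg'nv : g' nv = nv := hfx nv hnvcl
    have hx_u : ⟪xv, g' ov⟫ = 0 := by
      rw [← hm, LinearIsometryEquiv.inner_map_map]; exact hyov
    have hnv_u : ⟪nv, g' ov⟫ = 0 := by
      rw [← hg'nv, LinearIsometryEquiv.inner_map_map]; exact hnvov
    have huu : ⟪g' ov, g' ov⟫ = 1 := by
      rw [LinearIsometryEquiv.inner_map_map]; exact hovov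
    set t : ℝ := ⟪oxy, g' ov⟫ with htdef
    have hu_exp : g' ov = t • oxy := by
      have h := hrepr' (g' ov)
      rw [hx_u, hnv_u, zero_smul, zero_smul, zero_add, add_zero] at h
      exact h
    have ht2 : t * t = 1 := by
      have h := huu
      rw [hu_exp, real_inner_smul_left, real_inner_smul_right, hoxyoxy] at h
      linear_combination h
    rcases mul_self_eq_one_iff.mp ht2 with ht | ht
    · exfalso
      have hg'ov : g' ov = oxy := by rw [hu_exp, ht, one_smul]
      have h := hdetmat g' xv oxy nv hm hg'ov hg'nv
      rw [hd, Matrix.det_fin_three] at h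
      simp only [Matrix.of_apply, Matrix.cons_val', Matrix.cons_val_zero, Matrix.cons_val_one,
        Matrix.head_cons, Matrix.empty_val', Matrix.cons_val_fin_one, Matrix.head_fin_const,
        Matrix.cons_val_two, Matrix.tail_cons, hyxc, hyoxy, hynv, hovx, hovoxy, hovnv, hnvx,
        hnvoxy, hnvnv] at h
      ring_nf at h
      linarith [hs2]
    · have hg'ov : g' ov = -oxy := by rw [hu_exp, ht, neg_one_smul]
      refine LinearIsometryEquiv.ext fun v => ?_
      conv_lhs => rw [hrepr v]
      conv_rhs => rw [hrepr v]
      rw [map_add, map_add, _root_.map_smul, _root_.map_smul, _root_.map_smul, map_add, map_add,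
        _root_.map_smul, _root_.map_smul, _root_.map_smul, hm, hgy, hg'nv, hgnv, hg'ov, hgov]
  -- `T` agrees with `g` on `plane y`
  have hplx : ∀ v : V, v ∈ plane x ↔ ⟪xv, v⟫ = 0 := fun v => by
    rw [hxv]; exact Submodule.mem_orthogonal_singleton_iff_inner_right
  have hply : ∀ v : V, v ∈ plane y ↔ ⟪yv, v⟫ = 0 := fun v => by
    rw [hyv]; exact Submodule.mem_orthogonal_singleton_iff_inner_right
  have hTg : ∀ v ∈ plane y, (Cker x y - Oker x y) v = g v := fun v hv => by
    have hyv0 : ⟪yv, v⟫ = 0 := (hply v).mp hv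
    have hvexp := hrepr v
    rw [hyv0, zero_smul, zero_add] at hvexp
    rw [LinearMap.sub_apply, hCk, hOk]
    conv_rhs => rw [hvexp]
    rw [map_add, _root_.map_smul, _root_.map_smul, hgov, hgnv, smul_neg]
    exact sub_eq_neg_add _ _
  refine ⟨⟨g, ⟨hdetg, hgy, hgcl⟩, fun g' hg' => huniq g' hg'.1 hg'.2.1 hg'.2.2⟩, ?_, ?_, ?_⟩
  · intro g' hd hm hfx v hv
    rw [hTg v hv, huniq g' hd hm hfx]
  · intro v hv
    rw [hTg v hv]
    constructor
    · refine (hplx _).mpr ?_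
      rw [← hgy, LinearIsometryEquiv.inner_map_map]
      exact (hply v).mp hv
    · exact g.norm_map v
  · intro w hw
    have hmem : g.symm w ∈ plane y := by
      refine (hply _).mpr ?_
      have h : ⟪yv, g.symm w⟫ = ⟪g yv, g (g.symm w)⟫ := (LinearIsometryEquiv.inner_map_map g _ _).symm
      rw [h, hgy, LinearIsometryEquiv.apply_symm_apply]
      exact (hplx w).mp hw
    exact ⟨g.symm w, hmem, by rw [hTg _ hmem, LinearIsometryEquiv.apply_symm_apply]⟩
end
end

section
/- Let (h, e, f) be the standard sl₂-triple (with [h,e] = 2e, [h,f] = −2f, [e,f] = h), let M and W be complex representations of sl₂(ℂ), and let n ≥ 1. Suppose ψ ∈ M satisfies h·ψ = 2(n−1)·ψ and e·ψ = 0, and v ∈ W satisfies h·v = 2v, e·v = 0, and f³·v = 0. Set P = f^{n−1}·ψ ∈ M. Then in the tensor product representation M ⊗ W one has f^{n−1}·(ψ ⊗ v) = P ⊗ v + (1/n)·(e·P) ⊗ (f·v) + (1/(2n(n+1)))·(e²·P) ⊗ (f²·v). -/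
open TensorProduct Function

section Aux

variable {L : Type*} [LieRing L] [LieAlgebra ℂ L]
  {M : Type*} [AddCommGroup M] [Module ℂ M] [LieRingModule L M] [LieModule ℂ L M]
  {W : Type*} [AddCommGroup W] [Module ℂ W] [LieRingModule L W] [LieModule ℂ L W]
  {h e f : L}

lemma sl2aux_h (ht : IsSl2Triple h e f) (μ : ℂ) (ψ : M) (hψh : ⁅h, ψ⁆ = μ • ψ) :
    ∀ k : ℕ, ⁅h, (fun m : M => ⁅f, m⁆)^[k] ψ⁆
      = (μ - 2 * k) • (fun m : M => ⁅f, m⁆)^[k] ψ := by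
  intro k
  induction k with
  | zero => simpa using hψh
  | succ k ih =>
    rw [Function.iterate_succ_apply']
    set x := (fun m : M => ⁅f, m⁆)^[k] ψ with hx
    have : ⁅h, ⁅f, x⁆⁆ = ⁅⁅h, f⁆, x⁆ + ⁅f, ⁅h, x⁆⁆ := (leibniz_lie h f x)
    rw [this, ht.lie_h_f_nsmul, ih]
    push_cast
    simp only [neg_lie, lie_smul, smul_lie, nsmul_lie]
    match_scalars <;> push_cast <;> ring

lemma sl2aux_e (ht : IsSl2Triple h e f) (μ : ℂ) (ψ : M) (hψh : ⁅h, ψ⁆ = μ • ψ)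
    (hψe : ⁅e, ψ⁆ = 0) :
    ∀ k : ℕ, ⁅e, (fun m : M => ⁅f, m⁆)^[k + 1] ψ⁆
      = (((k : ℂ) + 1) * (μ - k)) • (fun m : M => ⁅f, m⁆)^[k] ψ := by
  intro k
  induction k with
  | zero =>
    simp only [zero_add, Function.iterate_one, Function.iterate_zero, id_eq]
    show ⁅e, ⁅f, ψ⁆⁆ = _
    rw [leibniz_lie e f ψ, ht.lie_e_f, hψh, hψe, lie_zero]
    match_scalars; push_cast; ring
  | succ k ih =>
    rw [Function.iterate_succ_apply']
    set x := (fun m : M => ⁅f, m⁆)^[k + 1] ψ with hx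
    rw [leibniz_lie e f x, ht.lie_e_f, ih, sl2aux_h ht μ ψ hψh (k + 1), lie_smul]
    rw [show ⁅f, (fun m : M => ⁅f, m⁆)^[k] ψ⁆ = x from
      (Function.iterate_succ_apply' _ k ψ).symm]
    match_scalars; push_cast; ring

lemma sl2aux_T (ψ : M) (v : W) (hvf : ⁅f, ⁅f, ⁅f, v⁆⁆⁆ = 0) :
    ∀ k : ℕ, (fun z : M ⊗[ℂ] W => ⁅f, z⁆)^[k + 2] (ψ ⊗ₜ v)
      = ((fun m : M => ⁅f, m⁆)^[k + 2] ψ) ⊗ₜ v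
        + ((k : ℂ) + 2) • (((fun m : M => ⁅f, m⁆)^[k + 1] ψ) ⊗ₜ ⁅f, v⁆)
        + (((k : ℂ) + 2) * ((k : ℂ) + 1) / 2) •
            (((fun m : M => ⁅f, m⁆)^[k] ψ) ⊗ₜ ⁅f, ⁅f, v⁆⁆) := by
  intro k
  induction k with
  | zero =>
    simp only [Function.iterate_succ_apply', Function.iterate_zero, id_eq,
      TensorProduct.LieModule.lie_tmul_right, lie_add]
    match_scalars <;> push_cast <;> ring
  | succ k ih =>
    rw [show k + 1 + 2 = (k + 2) + 1 from rfl, Function.iterate_succ_apply', ih]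
    simp only [lie_add, lie_smul, TensorProduct.LieModule.lie_tmul_right, hvf,
      tmul_zero, add_zero]
    rw [show ⁅f, (fun m : M => ⁅f, m⁆)^[k + 2] ψ⁆ = (fun m : M => ⁅f, m⁆)^[k + 2 + 1] ψ from
      (Function.iterate_succ_apply' _ _ ψ).symm,
      show ⁅f, (fun m : M => ⁅f, m⁆)^[k + 1] ψ⁆ = (fun m : M => ⁅f, m⁆)^[k + 2] ψ from
      (Function.iterate_succ_apply' _ _ ψ).symm,
      show ⁅f, (fun m : M => ⁅f, m⁆)^[k] ψ⁆ = (fun m : M => ⁅f, m⁆)^[k + 1] ψ from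
      (Function.iterate_succ_apply' _ _ ψ).symm]
    match_scalars <;> push_cast <;> ring

end Aux

/-- Let `(h,e,f)` be an `sl₂`-triple acting on complex representations
`M` and `W`, let `n ≥ 1`, let `ψ ∈ M` be a highest weight vector of weight `2(n-1)`
(`h·ψ = 2(n-1)ψ`, `e·ψ = 0`) and let `v ∈ W` satisfy `h·v = 2v`, `e·v = 0`, `f³·v = 0`.
Set `P = f^(n-1)·ψ`.  Then in `M ⊗ W` (with the Leibniz action of `f`):
`f^(n-1)(ψ ⊗ v) = P ⊗ v + (1/n)(eP) ⊗ (fv) + (1/(2n(n+1)))(e²P) ⊗ (f²v)`. -/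
theorem sl2_lowering_of_tensor_highest_weight
    {L : Type*} [LieRing L] [LieAlgebra ℂ L]
    {M : Type*} [AddCommGroup M] [Module ℂ M] [LieRingModule L M] [LieModule ℂ L M]
    {W : Type*} [AddCommGroup W] [Module ℂ W] [LieRingModule L W] [LieModule ℂ L W]
    (h e f : L) (ht : IsSl2Triple h e f)
    (n : ℕ) (hn : 1 ≤ n)
    (ψ : M) (hψh : ⁅h, ψ⁆ = ((2 : ℂ) * ((n : ℂ) - 1)) • ψ) (hψe : ⁅e, ψ⁆ = 0)
    (v : W) (hvh : ⁅h, v⁆ = (2 : ℂ) • v) (hve : ⁅e, v⁆ = 0)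
    (hvf : ⁅f, ⁅f, ⁅f, v⁆⁆⁆ = 0) :
    (fun z : M ⊗[ℂ] W => ⁅f, z⁆)^[n - 1] (ψ ⊗ₜ v)
      = ((fun m : M => ⁅f, m⁆)^[n - 1] ψ) ⊗ₜ v
        + (1 / (n : ℂ)) • (⁅e, (fun m : M => ⁅f, m⁆)^[n - 1] ψ⁆ ⊗ₜ ⁅f, v⁆)
        + (1 / (2 * (n : ℂ) * ((n : ℂ) + 1))) •
            (⁅e, ⁅e, (fun m : M => ⁅f, m⁆)^[n - 1] ψ⁆⁆ ⊗ₜ ⁅f, ⁅f, v⁆⁆) := by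
  match n, hn with
  | 1, _ =>
    simp [hψe]
  | 2, _ =>
    have hE := sl2aux_e ht (2 * (((2:ℕ) : ℂ) - 1)) ψ hψh hψe 0
    simp only [Nat.cast_ofNat, zero_add, Function.iterate_one, Function.iterate_zero, id_eq,
      Nat.cast_zero] at hE ⊢
    show ⁅f, ψ ⊗ₜ v⁆ = ⁅f, ψ⁆ ⊗ₜ v + _ • (⁅e, ⁅f, ψ⁆⁆ ⊗ₜ _) + _ • (⁅e, ⁅e, ⁅f, ψ⁆⁆⁆ ⊗ₜ _)
    rw [TensorProduct.LieModule.lie_tmul_right, hE, lie_smul, hψe, smul_zero, zero_tmul,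
      smul_zero, add_zero, ← smul_tmul', smul_smul]
    norm_num
  | (m + 3), _ =>
    have hE1 := sl2aux_e ht (2 * (((m + 3 : ℕ) : ℂ) - 1)) ψ hψh hψe (m + 1)
    have hE0 := sl2aux_e ht (2 * (((m + 3 : ℕ) : ℂ) - 1)) ψ hψh hψe m
    have hT := sl2aux_T (f := f) ψ v hvf m
    have hidx : m + 3 - 1 = m + 2 := rfl
    rw [hidx, hT, hE1, lie_smul, hE0]
    have h3 : ((m : ℂ) + 3) ≠ 0 := by
      have := Nat.cast_ne_zero (R := ℂ) (n := m + 3) |>.mpr (by omega)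
      push_cast at this; exact this
    have h4 : ((m : ℂ) + 4) ≠ 0 := by
      have := Nat.cast_ne_zero (R := ℂ) (n := m + 4) |>.mpr (by omega)
      push_cast at this; exact this
    have h4' : ((m : ℂ) + 3 + 1) ≠ 0 := by rw [show ((m:ℂ)+3+1) = (m:ℂ)+4 by ring]; exact h4
    simp only [← smul_tmul', smul_smul]
    push_cast
    match_scalars
    · ring
    · field_simp [h3, h4, h4']
      ring
    · field_simp [h3, h4, h4']
      ring
end

section
/- For every real t with |t| < 1, the following three definite integral identities hold: (1) ∫₀^π sin(θ)(1+cos(θ))(1−2t·cos(θ)+t²)^{−1/2} dθ = 2 + (2/3)t; (2) ∫₀^π sin³(θ)(1−2t·cos(θ)+t²)^{−3/2} dθ = 4/3; (3) ∫₀^π sin³(θ)(1−cos(θ))(1−2t·cos(θ)+t²)^{−5/2} dθ = 4/(3(1+t)). -/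
open Real

private lemma qpos (t : ℝ) (ht : |t| < 1) (θ : ℝ) : 0 < 1 - 2 * t * Real.cos θ + t ^ 2 := by
  have h1 : t * Real.cos θ ≤ |t| := by
    calc t * Real.cos θ ≤ |t * Real.cos θ| := le_abs_self _
      _ = |t| * |Real.cos θ| := abs_mul _ _
      _ ≤ |t| * 1 := mul_le_mul_of_nonneg_left (Real.abs_cos_le_one θ) (abs_nonneg t)
      _ = |t| := mul_one _
  have h2 : 0 < 1 - |t| := by linarith
  nlinarith [sq_abs t, mul_pos h2 h2]

private lemma hasDerivAt_s (t : ℝ) (ht : |t| < 1) (θ : ℝ) :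
    HasDerivAt (fun x => Real.sqrt (1 - 2 * t * Real.cos x + t ^ 2))
      (t * Real.sin θ / Real.sqrt (1 - 2 * t * Real.cos θ + t ^ 2)) θ := by
  have hQ := qpos t ht θ
  have hσ : Real.sqrt (1 - 2 * t * Real.cos θ + t ^ 2) ≠ 0 := (Real.sqrt_pos.mpr hQ).ne'
  have h1 : HasDerivAt (fun x : ℝ => 1 - 2 * t * Real.cos x + t ^ 2) (2 * t * Real.sin θ) θ := by
    have := (((Real.hasDerivAt_cos θ).const_mul (2 * t)).const_sub 1).add_const (t ^ 2)
    refine this.congr_deriv ?_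
    ring
  have h2 := h1.sqrt hQ.ne'
  convert h2 using 1
  field_simp

private lemma rpow_half (x : ℝ) (hx : 0 < x) (n : ℕ) :
    x ^ (-((n : ℝ) / 2)) = (Real.sqrt x)⁻¹ ^ n := by
  rw [inv_pow, ← Real.rpow_natCast (Real.sqrt x) n, Real.sqrt_eq_rpow, ← Real.rpow_mul hx.le,
    ← Real.rpow_neg hx.le]
  congr 1
  ring

private lemma integ (f F : ℝ → ℝ) (hF : ∀ θ ∈ Set.uIcc (0:ℝ) π, HasDerivAt F (f θ) θ)
    (hf : Continuous f) : ∫ θ in (0:ℝ)..π, f θ = F π - F 0 :=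
  intervalIntegral.integral_eq_sub_of_hasDerivAt hF (hf.intervalIntegrable 0 π)

/-- Three definite integral identities, valid for every real `t` with
`|t| < 1`:
(1) `∫₀^π sin θ (1+cos θ)(1-2t·cos θ+t²)^(-1/2) dθ = 2 + (2/3)t`;
(2) `∫₀^π sin³ θ (1-2t·cos θ+t²)^(-3/2) dθ = 4/3`;
(3) `∫₀^π sin³ θ (1-cos θ)(1-2t·cos θ+t²)^(-5/2) dθ = 4/(3(1+t))`. -/
theorem generating_function_integrals (t : ℝ) (ht : |t| < 1) :
    (∫ θ in (0 : ℝ)..π,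
        sin θ * (1 + cos θ) * (1 - 2 * t * cos θ + t ^ 2) ^ (-(1 / 2) : ℝ))
      = 2 + (2 / 3) * t ∧
    (∫ θ in (0 : ℝ)..π,
        sin θ ^ 3 * (1 - 2 * t * cos θ + t ^ 2) ^ (-(3 / 2) : ℝ)) = 4 / 3 ∧
    (∫ θ in (0 : ℝ)..π,
        sin θ ^ 3 * (1 - cos θ) * (1 - 2 * t * cos θ + t ^ 2) ^ (-(5 / 2) : ℝ))
      = 4 / (3 * (1 + t)) := by
  obtain ⟨hm, hp⟩ := abs_lt.mp ht
  have hQ : ∀ θ, 0 < 1 - 2 * t * cos θ + t ^ 2 := qpos t ht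
  set s : ℝ → ℝ := fun θ => Real.sqrt (1 - 2 * t * cos θ + t ^ 2) with hsdef
  have hspos : ∀ θ, 0 < s θ := fun θ => Real.sqrt_pos.mpr (hQ θ)
  have hs2 : ∀ θ, s θ ^ 2 = 1 - 2 * t * cos θ + t ^ 2 := fun θ => Real.sq_sqrt (hQ θ).le
  have hs' : ∀ θ, HasDerivAt s (t * sin θ / s θ) θ := hasDerivAt_s t ht
  have hQc : Continuous fun θ : ℝ => 1 - 2 * t * cos θ + t ^ 2 := by fun_prop
  have hsc : Continuous s := Real.continuous_sqrt.comp hQc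
  have hsic : Continuous fun θ => (s θ)⁻¹ := hsc.inv₀ fun θ => (hspos θ).ne'
  have s0 : s 0 = 1 - t := by
    have h : 1 - 2 * t * cos 0 + t ^ 2 = (1 - t) ^ 2 := by simp [Real.cos_zero]; ring
    rw [hsdef]; simp only [h]; exact Real.sqrt_sq (by linarith)
  have spi : s π = 1 + t := by
    have h : 1 - 2 * t * cos π + t ^ 2 = (1 + t) ^ 2 := by simp [Real.cos_pi]; ring
    rw [hsdef]; simp only [h]; exact Real.sqrt_sq (by linarith)
  have e1 : ∀ θ, (1 - 2 * t * cos θ + t ^ 2) ^ (-(1 / 2) : ℝ) = (s θ)⁻¹ := by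
    intro θ; have := rpow_half _ (hQ θ) 1; norm_num at this; simpa using this
  have e3 : ∀ θ, (1 - 2 * t * cos θ + t ^ 2) ^ (-(3 / 2) : ℝ) = (s θ)⁻¹ ^ 3 := by
    intro θ; have := rpow_half _ (hQ θ) 3; norm_num at this; simpa using this
  have e5 : ∀ θ, (1 - 2 * t * cos θ + t ^ 2) ^ (-(5 / 2) : ℝ) = (s θ)⁻¹ ^ 5 := by
    intro θ; have := rpow_half _ (hQ θ) 5; norm_num at this; simpa using this
  refine ⟨?_, ?_, ?_⟩
  · -- part 1
    simp only [e1]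
    rcases eq_or_ne t 0 with rfl | ht0
    · rw [integ _ (fun x => -cos x - cos x ^ 2 / 2) ?_ ?_]
      · norm_num
      · intro θ _
        have h := ((Real.hasDerivAt_cos θ).neg).sub (((Real.hasDerivAt_cos θ).pow 2).div_const 2)
        refine h.congr_deriv ?_
        symm
        have hσ : s θ = 1 := by rw [hsdef]; norm_num
        rw [hσ]
        ring
      · exact (continuous_sin.mul (continuous_const.add continuous_cos)).mul hsic
    · rw [integ _ (fun x => (1 + t) ^ 2 * s x / (2 * t ^ 2) - (s x) ^ 3 / (6 * t ^ 2)) ?_ ?_]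
      · rw [s0, spi]; field_simp; ring
      · intro θ _
        have h := (((hs' θ).const_mul ((1 + t) ^ 2)).div_const (2 * t ^ 2)).sub
          (((hs' θ).pow 3).div_const (6 * t ^ 2))
        refine h.congr_deriv ?_
        symm
        have hσ := (hspos θ).ne'
        have h2 := hs2 θ
        field_simp
        linear_combination (6 * Real.sin θ) * h2
      · exact (continuous_sin.mul (continuous_const.add continuous_cos)).mul hsic
  · -- part 2
    simp only [e3]
    rcases eq_or_ne t 0 with rfl | ht0
    · rw [integ _ (fun x => -cos x + cos x ^ 3 / 3) ?_ ?_]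
      · norm_num
      · intro θ _
        have h := ((Real.hasDerivAt_cos θ).neg).add (((Real.hasDerivAt_cos θ).pow 3).div_const 3)
        refine h.congr_deriv ?_
        symm
        have hσ : s θ = 1 := by rw [hsdef]; norm_num
        rw [hσ]
        have hpy := Real.sin_sq_add_cos_sq θ
        push_cast
        linear_combination Real.sin θ * hpy
      · exact (continuous_sin.pow 3).mul (hsic.pow 3)
    · rw [integ _ (fun x => -(1/(4*t^3)) *
          ((s x) ^ 3 / 3 - 2*(1+t^2)*(s x) - (1-t^2)^2 * (s x)⁻¹)) ?_ ?_]
      · rw [s0, spi]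
        have h1t : (1:ℝ) + t ≠ 0 := by linarith
        have h1t' : (1:ℝ) - t ≠ 0 := by linarith
        field_simp [h1t, h1t']
        ring
      · intro θ _
        have hA := ((hs' θ).pow 3).div_const 3
        have hB := (hs' θ).const_mul (2*(1+t^2))
        have hC := ((hs' θ).inv (hspos θ).ne').const_mul ((1-t^2)^2)
        have h := ((hA.sub hB).sub hC).const_mul (-(1/(4*t^3)))
        refine h.congr_deriv ?_
        symm
        have hσ := (hspos θ).ne'
        have h2 := hs2 θ
        have hpy := Real.sin_sq_add_cos_sq θ
        field_simp
        linear_combination (3*Real.sin θ*((s θ)^2 + (1 - 2*t*Real.cos θ + t^2))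
            - 6*Real.sin θ*(1+t^2)) * h2
          + (12*t^2*Real.sin θ) * hpy
      · exact (continuous_sin.pow 3).mul (hsic.pow 3)
  · -- part 3
    simp only [e5]
    rcases eq_or_ne t 0 with rfl | ht0
    · rw [integ _ (fun x => -cos x + cos x ^ 3 / 3 - sin x ^ 4 / 4) ?_ ?_]
      · norm_num
      · intro θ _
        have h := (((Real.hasDerivAt_cos θ).neg).add
          (((Real.hasDerivAt_cos θ).pow 3).div_const 3)).sub
          (((Real.hasDerivAt_sin θ).pow 4).div_const 4)
        refine h.congr_deriv ?_
        symm
        have hσ : s θ = 1 := by rw [hsdef]; norm_num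
        rw [hσ]
        have hpy := Real.sin_sq_add_cos_sq θ
        push_cast
        linear_combination Real.sin θ * hpy
      · exact ((continuous_sin.pow 3).mul (continuous_const.sub continuous_cos)).mul (hsic.pow 5)
    · rw [integ _ (fun x => -(1/(24*t^4)) *
          ((s x) ^ 3 - 3*((1+t)^2 + 2*(1-t)^2) * (s x)
            - 3*(2*(1-t)^2*(1+t)^2 + (1-t)^4) * (s x)⁻¹
            + (1-t)^4*(1+t)^2 * ((s x) ^ 3)⁻¹)) ?_ ?_]
      · rw [s0, spi]
        have h1t : (1:ℝ) + t ≠ 0 := by linarith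
        have h1t' : (1:ℝ) - t ≠ 0 := by linarith
        field_simp [h1t, h1t']
        ring
      · intro θ _
        have hA := (hs' θ).pow 3
        have hB := (hs' θ).const_mul (3*((1+t)^2 + 2*(1-t)^2))
        have hC := ((hs' θ).inv (hspos θ).ne').const_mul (3*(2*(1-t)^2*(1+t)^2 + (1-t)^4))
        have hD := (((hs' θ).pow 3).inv (pow_ne_zero 3 (hspos θ).ne')).const_mul
          ((1-t)^4*(1+t)^2)
        have h := (((hA.sub hB).sub hC).add hD).const_mul (-(1/(24*t^4)))
        refine h.congr_deriv ?_
        symm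
        have hσ := (hspos θ).ne'
        have h2 := hs2 θ
        have hpy := Real.sin_sq_add_cos_sq θ
        simp only [Pi.pow_apply]
        field_simp
        linear_combination (3*Real.sin θ*(s θ)^2*((s θ)^4
            + (s θ)^2*(1 - 2*t*Real.cos θ + t^2) + (1 - 2*t*Real.cos θ + t^2)^2
            - ((1+t)^2 + 2*(1-t)^2)*((s θ)^2 + (1 - 2*t*Real.cos θ + t^2))
            + (2*(1-t)^2*(1+t)^2 + (1-t)^4))) * h2
          + (24*t^3*Real.sin θ*(s θ)^2*(1-Real.cos θ)) * hpy
      · exact ((continuous_sin.pow 3).mul (continuous_const.sub continuous_cos)).mul (hsic.pow 5)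
end
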